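/- arXiv:1809.01279 — 6 statements merged into one kernel-verified Lean document; each statement's English description precedes it below -/
import Mathlib

section
/- For differentiable functions (or elements of a differential field) v_1,...,v_a, u, w, the Wronskian identity Wr(Wr(v_1,...,v_a,u), Wr(v_1,...,v_a,w)) = Wr(v_1,...,v_a,u,w) · Wr(v_1,...,v_a) holds, where Wr denotes the Wronskian determinant Wr(f_1,...,f_r) = det(f_j^{(i-1)})_{i,j=1}^r. -/
open Matrix

def wemb (a : ℕ) : Fin a → Fin (a + 2) := fun i => i.castSucc.castSucc
def wcc (a : ℕ) : Fin 2 → Fin (a + 2) := fun k =>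
  if k = 0 then (Fin.last a).castSucc else Fin.last (a + 1)
def wrmap (a : ℕ) (k : Fin 2) : Fin (a + 1) → Fin (a + 2) := Fin.snoc (wemb a) (wcc a k)


theorem myderiv_prod {R A : Type*} [CommRing R] [CommRing A] [Algebra R A]
    (D : Derivation R A A) {ι : Type*} [DecidableEq ι] (s : Finset ι) (g : ι → A) :
    D (∏ i ∈ s, g i) = ∑ i ∈ s, D (g i) * ∏ j ∈ s.erase i, g j := by
  induction s using Finset.induction_on with
  | empty => simp
  | insert b s ha ih =>
    rw [Finset.prod_insert ha, D.leibniz, smul_eq_mul, smul_eq_mul, ih,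
      Finset.sum_insert ha, Finset.erase_insert ha]
    rw [Finset.mul_sum]
    rw [mul_comm (∏ i ∈ s, g i) (D (g b)), add_comm]
    congr 1
    apply Finset.sum_congr rfl
    intro i hi
    rw [Finset.erase_insert_of_ne (by rintro rfl; exact ha hi),
      Finset.prod_insert (fun h => ha (Finset.mem_of_mem_erase h))]
    ring

theorem myderiv_det {R A : Type*} [CommRing R] [CommRing A] [Algebra R A]
    (D : Derivation R A A) {n : ℕ} (M : Matrix (Fin n) (Fin n) A) :
    D M.det = ∑ k, (M.updateRow k (fun j => D (M k j))).det := by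
  have hdet : ∀ N : Matrix (Fin n) (Fin n) A,
      N.det = ∑ σ : Equiv.Perm (Fin n), Equiv.Perm.sign σ • ∏ i, N i (σ i) := by
    intro N
    rw [← Matrix.det_transpose, Matrix.det_apply]
    rfl
  rw [hdet, map_sum]
  have h1 : ∀ σ : Equiv.Perm (Fin n),
      D (Equiv.Perm.sign σ • ∏ i, M i (σ i)) =
        Equiv.Perm.sign σ • ∑ k, D (M k (σ k)) * ∏ i ∈ Finset.univ.erase k, M i (σ i) := by
    intro σ
    rw [Units.smul_def, Units.smul_def, map_zsmul, myderiv_prod]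
  simp_rw [h1, Finset.smul_sum]
  rw [Finset.sum_comm]
  apply Finset.sum_congr rfl
  intro k _
  rw [hdet]
  apply Finset.sum_congr rfl
  intro σ _
  congr 1
  rw [← Finset.mul_prod_erase Finset.univ _ (Finset.mem_univ k)]
  rw [Matrix.updateRow_self]
  congr 1
  apply Finset.prod_congr rfl
  intro i hi
  rw [Matrix.updateRow_apply, if_neg (Finset.ne_of_mem_erase hi)]

theorem myjacobi_blocks {F : Type*} [Field F] {a : ℕ}
    (P : Matrix (Fin a) (Fin a) F) (Q : Matrix (Fin a) (Fin 2) F)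
    (R : Matrix (Fin 2) (Fin a) F) (S : Matrix (Fin 2) (Fin 2) F)
    (hP : P.det ≠ 0) :
    (fromBlocks P (Q.submatrix id (fun _ : Fin 1 => 0)) (R.submatrix (fun _ : Fin 1 => 0) id)
        (of fun _ _ => S 0 0)).det *
      (fromBlocks P (Q.submatrix id (fun _ : Fin 1 => 1)) (R.submatrix (fun _ : Fin 1 => 1) id)
        (of fun _ _ => S 1 1)).det -
    (fromBlocks P (Q.submatrix id (fun _ : Fin 1 => 1)) (R.submatrix (fun _ : Fin 1 => 0) id)
        (of fun _ _ => S 0 1)).det *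
      (fromBlocks P (Q.submatrix id (fun _ : Fin 1 => 0)) (R.submatrix (fun _ : Fin 1 => 1) id)
        (of fun _ _ => S 1 0)).det =
    (fromBlocks P Q R S).det * P.det := by
  haveI : Invertible P := P.invertibleOfIsUnitDet (isUnit_iff_ne_zero.mpr hP)
  have key : ∀ (k l : Fin 2),
      (fromBlocks P (Q.submatrix id (fun _ : Fin 1 => l)) (R.submatrix (fun _ : Fin 1 => k) id)
        (of fun _ _ => S k l) : Matrix _ _ F).det
        = P.det * (S k l - (R * ⅟P * Q) k l) := by
    intro k l
    rw [det_fromBlocks₁₁, Matrix.det_fin_one]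
    congr 1
  rw [key 0 0, key 1 1, key 0 1, key 1 0, det_fromBlocks₁₁]
  rw [Matrix.det_fin_two]
  simp only [Matrix.sub_apply]
  ring

theorem wsub_det {F : Type*} [CommRing F] (M : Matrix (Fin (a + 2)) (Fin (a + 2)) F)
    (k l : Fin 2) :
    (M.submatrix (wrmap a k) (wrmap a l)).det =
      (fromBlocks (M.submatrix (wemb a) (wemb a))
        (M.submatrix (wemb a) (fun _ : Fin 1 => wcc a l))
        (M.submatrix (fun _ : Fin 1 => wcc a k) (wemb a))
        (of fun _ _ => M (wcc a k) (wcc a l))).det := by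
  rw [← Matrix.det_submatrix_equiv_self (finSumFinEquiv : Fin a ⊕ Fin 1 ≃ Fin (a + 1))
    (M.submatrix (wrmap a k) (wrmap a l)), Matrix.submatrix_submatrix]
  congr 1
  ext i j
  have he : ∀ i : Fin a ⊕ Fin 1, wrmap a k (finSumFinEquiv i) =
      Sum.elim (wemb a) (fun _ => wcc a k) i := by
    intro i
    rcases i with i | i
    · simp only [finSumFinEquiv_apply_left, Sum.elim_inl]
      show wrmap a k i.castSucc = wemb a i
      simp [wrmap, Fin.snoc_castSucc]
    · have : i = 0 := Subsingleton.elim _ _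
      subst this
      simp only [finSumFinEquiv_apply_right, Sum.elim_inr]
      show wrmap a k (Fin.last a) = wcc a k
      simp [wrmap, Fin.natAdd]
  have he' : ∀ i : Fin a ⊕ Fin 1, wrmap a l (finSumFinEquiv i) =
      Sum.elim (wemb a) (fun _ => wcc a l) i := by
    intro i
    rcases i with i | i
    · simp only [finSumFinEquiv_apply_left, Sum.elim_inl]
      show wrmap a l i.castSucc = wemb a i
      simp [wrmap, Fin.snoc_castSucc]
    · have : i = 0 := Subsingleton.elim _ _
      subst this
      simp only [finSumFinEquiv_apply_right, Sum.elim_inr]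
      show wrmap a l (Fin.last a) = wcc a l
      simp [wrmap]
  rw [Matrix.submatrix_apply, Function.comp_apply, Function.comp_apply, he, he']
  rcases i with i | i <;> rcases j with j | j <;> rfl

theorem wfull_det {F : Type*} [CommRing F] (M : Matrix (Fin (a + 2)) (Fin (a + 2)) F) :
    M.det = (fromBlocks (M.submatrix (wemb a) (wemb a))
        (M.submatrix (wemb a) (wcc a))
        (M.submatrix (wcc a) (wemb a))
        (M.submatrix (wcc a) (wcc a))).det := by
  rw [← Matrix.det_submatrix_equiv_self (finSumFinEquiv : Fin a ⊕ Fin 2 ≃ Fin (a + 2)) M]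
  congr 1
  ext i j
  have he : ∀ i : Fin a ⊕ Fin 2, (finSumFinEquiv i : Fin (a + 2)) =
      Sum.elim (wemb a) (wcc a) i := by
    intro i
    rcases i with i | i
    · simp only [finSumFinEquiv_apply_left, Sum.elim_inl]
      apply Fin.ext
      simp [wemb]
    · simp only [finSumFinEquiv_apply_right, Sum.elim_inr]
      apply Fin.ext
      fin_cases i <;> simp [wcc, Fin.natAdd]
  rw [Matrix.submatrix_apply, he, he]
  rcases i with i | i <;> rcases j with j | j <;> rfl

theorem hcomm' {R S : Type*} [CommRing R] [CommRing S] (φ : R →+* S) {n k : ℕ}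
    (N : Matrix (Fin n) (Fin n) R) (f g : Fin k → Fin n) :
    φ (N.submatrix f g).det = ((N.map φ).submatrix f g).det := by
  rw [Matrix.submatrix_map, RingHom.map_det, RingHom.mapMatrix_apply]

theorem wjacobi_field {F : Type*} [Field F] (M : Matrix (Fin (a + 2)) (Fin (a + 2)) F)
    (hP : (M.submatrix (wemb a) (wemb a)).det ≠ 0) :
    (M.submatrix (wrmap a 0) (wrmap a 0)).det * (M.submatrix (wrmap a 1) (wrmap a 1)).det -
      (M.submatrix (wrmap a 0) (wrmap a 1)).det * (M.submatrix (wrmap a 1) (wrmap a 0)).det =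
    M.det * (M.submatrix (wemb a) (wemb a)).det := by
  rw [wsub_det M 0 0, wsub_det M 1 1, wsub_det M 0 1, wsub_det M 1 0, wfull_det M]
  exact myjacobi_blocks (M.submatrix (wemb a) (wemb a)) (M.submatrix (wemb a) (wcc a))
    (M.submatrix (wcc a) (wemb a)) (M.submatrix (wcc a) (wcc a)) hP

theorem wjacobi {R : Type*} [CommRing R] (M : Matrix (Fin (a + 2)) (Fin (a + 2)) R) :
    (M.submatrix (wrmap a 0) (wrmap a 0)).det * (M.submatrix (wrmap a 1) (wrmap a 1)).det -
      (M.submatrix (wrmap a 0) (wrmap a 1)).det * (M.submatrix (wrmap a 1) (wrmap a 0)).det =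
    M.det * (M.submatrix (wemb a) (wemb a)).det := by
  set A := MvPolynomial (Fin (a + 2) × Fin (a + 2)) ℤ with hA
  set F := FractionRing A with hF
  set G : Matrix (Fin (a + 2)) (Fin (a + 2)) A := mvPolynomialX (Fin (a + 2)) (Fin (a + 2)) ℤ
    with hG
  have hinj : Function.Injective (algebraMap A F) := IsFractionRing.injective A F
  -- generic identity over A
  have hgen : (G.submatrix (wrmap a 0) (wrmap a 0)).det *
        (G.submatrix (wrmap a 1) (wrmap a 1)).det -
      (G.submatrix (wrmap a 0) (wrmap a 1)).det * (G.submatrix (wrmap a 1) (wrmap a 0)).det =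
      G.det * (G.submatrix (wemb a) (wemb a)).det := by
    apply hinj
    have hcomm : ∀ {k : ℕ} (f g : Fin k → Fin (a + 2)),
        (algebraMap A F) (G.submatrix f g).det =
          ((G.map (algebraMap A F)).submatrix f g).det := fun f g => hcomm' _ G f g
    rw [map_sub, _root_.map_mul, _root_.map_mul, _root_.map_mul, hcomm, hcomm, hcomm, hcomm, hcomm,
      RingHom.map_det, RingHom.mapMatrix_apply]
    apply wjacobi_field
    rw [← hcomm]
    intro h
    have h0 : (G.submatrix (wemb a) (wemb a)).det = 0 := by
      apply hinj
      rw [h, map_zero]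
    -- the generic a×a determinant is nonzero
    have hre : G.submatrix (wemb a) (wemb a) =
        (mvPolynomialX (Fin a) (Fin a) ℤ).map
          (MvPolynomial.rename (Prod.map (wemb a) (wemb a))).toRingHom := by
      ext i j
      simp [hG, Prod.map, MvPolynomial.rename_X]
    rw [hre] at h0
    have h0' : (MvPolynomial.rename (Prod.map (wemb a) (wemb a))).toRingHom
        (mvPolynomialX (Fin a) (Fin a) ℤ).det = 0 := by
      rw [RingHom.map_det, RingHom.mapMatrix_apply]; exact h0
    have hrinj : Function.Injective (Prod.map (wemb a) (wemb a)) := by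
      apply Function.Injective.prodMap <;>
        exact fun i j hij => by
          simpa [wemb, Fin.ext_iff] using congrArg (fun x : Fin (a+2) => (x : ℕ)) hij
    have := MvPolynomial.rename_injective (R := ℤ) _ hrinj
    have hz : (mvPolynomialX (Fin a) (Fin a) ℤ).det = 0 := by
      apply this
      simpa using h0'
    exact det_mvPolynomialX_ne_zero (Fin a) ℤ hz
  -- specialize to M
  have φ := MvPolynomial.eval₂Hom (Int.castRingHom R) (fun p : Fin (a+2) × Fin (a+2) => M p.1 p.2)
  set f : A →+* R :=
    MvPolynomial.eval₂Hom (Int.castRingHom R) (fun p : Fin (a+2) × Fin (a+2) => M p.1 p.2) with hf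
  have hGM : G.map f = M := mvPolynomialX_map_eval₂ _ M
  have := congrArg f hgen
  rw [map_sub, _root_.map_mul, _root_.map_mul, _root_.map_mul, hcomm' f G, hcomm' f G,
    hcomm' f G, hcomm' f G, hcomm' f G, RingHom.map_det, RingHom.mapMatrix_apply, hGM] at this
  exact this

/-- The Wronskian `Wr(f_1,…,f_r) = det(f_j^{(i-1)})` of elements of a differential field. -/
noncomputable def wronskian {K : Type*} [Field K] [CharZero K] (D : Derivation ℚ K K)
    {r : ℕ} (f : Fin r → K) : K :=
  (Matrix.of fun i j : Fin r => (⇑D)^[(i : ℕ)] (f j)).det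

/-- The Wronskian identity
`Wr(Wr(v_1,…,v_a,u), Wr(v_1,…,v_a,w)) = Wr(v_1,…,v_a,u,w) · Wr(v_1,…,v_a)`. -/
theorem stmt_6 {K : Type*} [Field K] [CharZero K] (D : Derivation ℚ K K)
    {a : ℕ} (v : Fin a → K) (u w : K) :
    wronskian D ![wronskian D (Fin.snoc v u), wronskian D (Fin.snoc v w)] =
      wronskian D (Fin.snoc (Fin.snoc v u) w) * wronskian D v := by
  classical
  set f : Fin (a + 2) → K := Fin.snoc (Fin.snoc v u) w with hf
  set M : Matrix (Fin (a + 2)) (Fin (a + 2)) K := Matrix.of fun i j => (⇑D)^[(i : ℕ)] (f j)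
    with hM
  -- index value facts
  have hval0 : ∀ i : Fin (a + 1), ((wrmap a 0 i : Fin (a + 2)) : ℕ) = (i : ℕ) := by
    intro i
    refine Fin.lastCases ?_ (fun i => ?_) i
    · simp [wrmap, wcc, Fin.snoc_last]
    · simp [wrmap, wemb, Fin.snoc_castSucc]
  have hval1 : ∀ i : Fin (a + 1),
      ((wrmap a 1 i : Fin (a + 2)) : ℕ) = if i = Fin.last a then a + 1 else (i : ℕ) := by
    intro i
    refine Fin.lastCases ?_ (fun i => ?_) i
    · simp [wrmap, wcc, Fin.snoc_last]
    · rw [if_neg (Fin.castSucc_lt_last i).ne]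
      simp [wrmap, wemb, Fin.snoc_castSucc]
  have hcolu : ∀ j : Fin (a + 1), f (wrmap a 0 j) = (Fin.snoc v u : Fin (a+1) → K) j := by
    intro j
    refine Fin.lastCases ?_ (fun j => ?_) j
    · rw [show wrmap a 0 (Fin.last a) = (Fin.last a).castSucc by simp [wrmap, wcc, Fin.snoc_last]]
      simp [hf, Fin.snoc_castSucc, Fin.snoc_last]
    · rw [show wrmap a 0 j.castSucc = (wemb a) j by simp [wrmap, Fin.snoc_castSucc]]
      simp [hf, wemb, Fin.snoc_castSucc]
  have hcolw : ∀ j : Fin (a + 1), f (wrmap a 1 j) = (Fin.snoc v w : Fin (a+1) → K) j := by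
    intro j
    refine Fin.lastCases ?_ (fun j => ?_) j
    · rw [show wrmap a 1 (Fin.last a) = Fin.last (a + 1) by simp [wrmap, wcc, Fin.snoc_last]]
      simp [hf, Fin.snoc_last]
    · rw [show wrmap a 1 j.castSucc = (wemb a) j by simp [wrmap, Fin.snoc_castSucc]]
      simp [hf, wemb, Fin.snoc_castSucc]
  -- the four minors
  have hW : ∀ (g : Fin (a + 1) → K) (l : Fin 2), (∀ j, f (wrmap a l j) = g j) →
      wronskian D g = (M.submatrix (wrmap a 0) (wrmap a l)).det := by
    intro g l hg
    unfold wronskian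
    congr 1
    ext i j
    rw [Matrix.submatrix_apply, hM, Matrix.of_apply, Matrix.of_apply, hval0, hg]
  have hDW : ∀ (g : Fin (a + 1) → K) (l : Fin 2), (∀ j, f (wrmap a l j) = g j) →
      D (wronskian D g) = (M.submatrix (wrmap a 1) (wrmap a l)).det := by
    intro g l hg
    unfold wronskian
    rw [myderiv_det]
    rw [Finset.sum_eq_single (Fin.last a)]
    · congr 1
      ext i j
      refine Fin.lastCases ?_ (fun i => ?_) i
      · rw [Matrix.updateRow_self, Matrix.submatrix_apply, hM, Matrix.of_apply,
          Matrix.of_apply, hg, hval1, if_pos rfl, ← Function.iterate_succ_apply' (⇑D)]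
        simp
      · rw [Matrix.updateRow_apply, if_neg (Fin.castSucc_lt_last i).ne,
          Matrix.submatrix_apply, hM, Matrix.of_apply, Matrix.of_apply, hg, hval1,
          if_neg (Fin.castSucc_lt_last i).ne]
    · intro k _ hk
      obtain ⟨k', rfl⟩ := Fin.exists_castSucc_eq.mpr hk
      apply Matrix.det_zero_of_row_eq (Fin.castSucc_lt_succ (i := k')).ne
      funext j
      rw [Matrix.updateRow_self, Matrix.updateRow_apply,
        if_neg (Fin.castSucc_lt_succ (i := k')).ne', Matrix.of_apply, Matrix.of_apply,
        Fin.coe_castSucc, Fin.val_succ, Function.iterate_succ_apply' (⇑D)]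
    · intro h
      exact absurd (Finset.mem_univ _) h
  -- 2×2 wronskian
  have wr2 : ∀ A B : K, wronskian D ![A, B] = A * D B - B * D A := by
    intro A B
    unfold wronskian
    rw [Matrix.det_fin_two]
    simp [mul_comm]
  rw [wr2, hDW _ 0 hcolu, hDW _ 1 hcolw, hW _ 0 hcolu, hW _ 1 hcolw]
  have hWf : wronskian D f = M.det := rfl
  have hWv : wronskian D v = (M.submatrix (wemb a) (wemb a)).det := by
    unfold wronskian
    congr 1
    ext i j
    rw [Matrix.submatrix_apply, hM, Matrix.of_apply, Matrix.of_apply]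
    have h1 : ((wemb a i : Fin (a + 2)) : ℕ) = (i : ℕ) := rfl
    have h2 : f (wemb a j) = v j := by simp [hf, wemb, Fin.snoc_castSucc]
    rw [h1, h2]
  rw [hWf, hWv]
  exact wjacobi M
end

section
/- With h_1,...,h_m positive integers (m ≥ 2) and distinct complex numbers z_1,...,z_m, let N(x) = (Σ_k h_k)^{-1} Σ_{k=1}^m h_k Π_{j≠k}(x - z_j), a monic polynomial of degree m-1 (assume Σ h_k ≠ 0). If N has no root at z_1, then the logarithmic derivative of N evaluated at z_1 satisfies N'(z_1)/N(z_1) = Σ_{k=2}^m (h_1 + h_k)/(h_1 (z_1 - z_k)). -/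
open Polynomial

private lemma stmt10_deriv_prod_aux {ι : Type*} [DecidableEq ι] (s : Finset ι)
    (f : ι → Polynomial ℂ) :
    derivative (∏ i ∈ s, f i) = ∑ i ∈ s, (∏ j ∈ s.erase i, f j) * derivative (f i) := by
  induction s using Finset.induction_on with
  | empty => simp
  | @insert a s ha ih =>
    rw [Finset.prod_insert ha, derivative_mul, ih, Finset.sum_insert ha,
      Finset.erase_insert ha, Finset.mul_sum]
    congr 1
    · exact mul_comm _ _
    · refine Finset.sum_congr rfl fun i hi => ?_
      rw [Finset.erase_insert_of_ne (ne_of_mem_of_not_mem hi ha).symm,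
        Finset.prod_insert (fun hc => ha (Finset.mem_of_mem_erase hc)), mul_assoc]

/-- With positive integers `h_1,…,h_m` (`m ≥ 2`) and distinct `z_1,…,z_m`, the monic degree
`m-1` polynomial `N(x) = (∑ h_k)⁻¹ ∑_k h_k ∏_{j≠k}(x - z_j)` satisfies, provided
`N(z_1) ≠ 0`: `N'(z_1)/N(z_1) = ∑_{k=2}^m (h_1 + h_k)/(h_1 (z_1 - z_k))`. -/
theorem stmt_10 (m : ℕ) (hm : 2 ≤ m) (h : Fin m → ℕ) (hpos : ∀ k, 0 < h k)
    (z : Fin m → ℂ) (hz : Function.Injective z)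
    (hsum : (∑ k, (h k : ℂ)) ≠ 0)
    (N : Polynomial ℂ)
    (hN : N = C (∑ k, (h k : ℂ))⁻¹ *
      ∑ k, C (h k : ℂ) * ∏ j ∈ Finset.univ.erase k, (X - C (z j)))
    (hroot : N.eval (z ⟨0, by omega⟩) ≠ 0) :
    N.Monic ∧ N.natDegree = m - 1 ∧
    (derivative N).eval (z ⟨0, by omega⟩) / N.eval (z ⟨0, by omega⟩) =
      ∑ k ∈ Finset.univ.erase (⟨0, by omega⟩ : Fin m),
        ((h ⟨0, by omega⟩ : ℂ) + (h k : ℂ)) /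
          ((h ⟨0, by omega⟩ : ℂ) * (z ⟨0, by omega⟩ - z k)) := by
  have h0m : 0 < m := by omega
  set e0 : Fin m := ⟨0, by omega⟩ with he0
  set S : ℂ := ∑ k, (h k : ℂ) with hS
  set P : Fin m → Polynomial ℂ :=
    fun k => ∏ j ∈ Finset.univ.erase k, (X - C (z j)) with hPdef
  have hPmonic : ∀ k, (P k).Monic := fun k =>
    monic_prod_of_monic _ _ fun j _ => monic_X_sub_C _
  have hPdeg : ∀ k, (P k).natDegree = m - 1 := by
    intro k
    rw [hPdef]
    simp only
    rw [natDegree_prod _ _ (fun j _ => X_sub_C_ne_zero _)]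
    simp [Finset.card_erase_of_mem]
  -- degree bound
  have hdegsum : (∑ k, C (h k : ℂ) * P k).natDegree ≤ m - 1 := by
    apply natDegree_sum_le_of_forall_le
    intro k _
    exact (natDegree_C_mul_le _ _).trans (hPdeg k).le
  have hNdegle : N.natDegree ≤ m - 1 := by
    rw [hN]
    exact (natDegree_C_mul_le _ _).trans hdegsum
  -- leading coefficient
  have hcoeff : N.coeff (m - 1) = 1 := by
    rw [hN, coeff_C_mul, finset_sum_coeff]
    have hc1 : ∀ k : Fin m, (C (h k : ℂ) * P k).coeff (m - 1) = (h k : ℂ) := by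
      intro k
      rw [coeff_C_mul, ← hPdeg k, (hPmonic k).coeff_natDegree, mul_one]
    rw [Finset.sum_congr rfl fun k _ => hc1 k, ← hS, inv_mul_cancel₀ hsum]
  have hmonic : N.Monic := monic_of_natDegree_le_of_coeff_eq_one _ hNdegle hcoeff
  have hNdeg : N.natDegree = m - 1 :=
    le_antisymm hNdegle (le_natDegree_of_ne_zero (by rw [hcoeff]; exact one_ne_zero))
  refine ⟨hmonic, hNdeg, ?_⟩
  -- evaluation computations
  set z0 : ℂ := z e0 with hz0
  set Q : Fin m → ℂ :=
    fun k => ∏ j ∈ (Finset.univ.erase e0).erase k, (z0 - z j) with hQdef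
  set R : ℂ := ∏ j ∈ Finset.univ.erase e0, (z0 - z j) with hRdef
  have hQR : ∀ k ∈ Finset.univ.erase e0, (z0 - z k) * Q k = R := by
    intro k hk
    exact Finset.mul_prod_erase _ (fun j => z0 - z j) hk
  have hevalP0 : ∀ k, k ≠ e0 → (P k).eval z0 = 0 := by
    intro k hk
    rw [hPdef]
    simp only [eval_prod, eval_sub, eval_X, eval_C]
    refine Finset.prod_eq_zero (i := e0)
      (Finset.mem_erase.mpr ⟨Ne.symm hk, Finset.mem_univ _⟩) ?_
    simp [hz0]
  have hNz : N.eval z0 = S⁻¹ * ((h e0 : ℂ) * R) := by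
    rw [hN, eval_mul, eval_C, eval_finset_sum]
    congr 1
    rw [Finset.sum_eq_single e0 (fun k _ hk => by rw [eval_mul, hevalP0 k hk, mul_zero])
      (fun hc => absurd (Finset.mem_univ e0) hc)]
    rw [eval_mul, eval_C]
    congr 1
    rw [hRdef, eval_prod]
    simp
  have hRne : R ≠ 0 := by
    intro hc
    apply hroot
    rw [hNz, hc, mul_zero, mul_zero]
  have hQne : ∀ k ∈ Finset.univ.erase e0, Q k ≠ 0 := by
    intro k hk hc
    apply hRne
    rw [← hQR k hk, hc, mul_zero]
  -- derivative of P k evaluated at z0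
  have hevalDP : ∀ k, (derivative (P k)).eval z0 =
      ∑ i ∈ Finset.univ.erase k, ∏ j ∈ (Finset.univ.erase k).erase i, (z0 - z j) := by
    intro k
    rw [hPdef]
    simp only
    rw [stmt10_deriv_prod_aux]
    simp [eval_finset_sum, eval_prod]
  have hDP0 : (derivative (P e0)).eval z0 = ∑ i ∈ Finset.univ.erase e0, Q i := by
    rw [hevalDP]
  have hDPk : ∀ k, k ≠ e0 → (derivative (P k)).eval z0 = Q k := by
    intro k hk
    rw [hevalDP]
    rw [Finset.sum_eq_single e0]
    · rw [Finset.erase_right_comm]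
    · intro i hi hine
      refine Finset.prod_eq_zero (i := e0) (Finset.mem_erase.mpr
        ⟨Ne.symm hine, Finset.mem_erase.mpr ⟨Ne.symm hk, Finset.mem_univ _⟩⟩) ?_
      simp [hz0]
    · intro hc
      exact absurd (Finset.mem_erase.mpr ⟨Ne.symm hk, Finset.mem_univ _⟩) hc
  have hDN : (derivative N).eval z0 =
      S⁻¹ * ∑ k ∈ Finset.univ.erase e0, ((h e0 : ℂ) + (h k : ℂ)) * Q k := by
    rw [hN, derivative_C_mul, eval_mul, eval_C]
    congr 1
    rw [derivative_sum, eval_finset_sum]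
    have hterm : ∀ k : Fin m, (derivative (C (h k : ℂ) * P k)).eval z0 =
        (h k : ℂ) * (derivative (P k)).eval z0 := by
      intro k
      rw [derivative_C_mul, eval_mul, eval_C]
    calc (∑ k, (derivative (C (h k : ℂ) * P k)).eval z0)
        = ∑ k, (h k : ℂ) * (derivative (P k)).eval z0 :=
          Finset.sum_congr rfl fun k _ => hterm k
      _ = (h e0 : ℂ) * (derivative (P e0)).eval z0 +
            ∑ k ∈ Finset.univ.erase e0, (h k : ℂ) * (derivative (P k)).eval z0 :=
          (Finset.add_sum_erase _ _ (Finset.mem_univ e0)).symm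
      _ = (h e0 : ℂ) * ∑ i ∈ Finset.univ.erase e0, Q i +
            ∑ k ∈ Finset.univ.erase e0, (h k : ℂ) * Q k := by
          rw [hDP0]
          congr 1
          exact Finset.sum_congr rfl fun k hk => by
            rw [hDPk k (Finset.ne_of_mem_erase hk)]
      _ = ∑ k ∈ Finset.univ.erase e0, ((h e0 : ℂ) + (h k : ℂ)) * Q k := by
          rw [Finset.mul_sum, ← Finset.sum_add_distrib]
          exact Finset.sum_congr rfl fun k _ => by ring
  rw [hDN, hNz, mul_div_mul_left _ _ (inv_ne_zero hsum), Finset.sum_div]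
  refine Finset.sum_congr rfl fun k hk => ?_
  rw [← hQR k hk]
  rw [show (h e0 : ℂ) * ((z0 - z k) * Q k) = ((h e0 : ℂ) * (z0 - z k)) * Q k by ring,
    mul_div_mul_right _ _ (hQne k hk)]
end

section
/- Let h_1, h_2, h_3 be nonzero integers and z_1, z_2, z_3 distinct complex numbers. The polynomial N(x) = (h_1+h_2+h_3)x² - (h_1(z_2+z_3)+h_2(z_1+z_3)+h_3(z_1+z_2))x + (h_1 z_2 z_3 + h_2 z_1 z_3 + h_3 z_1 z_2) has a double root (i.e., its discriminant vanishes) if and only if the 2×2 matrix A = [[-(h_1+h_2)/(z_1-z_2), -h_3/(z_1-z_2)], [-h_2/(z_1-z_3), -(h_1+h_3)/(z_1-z_3)]] has a repeated eigenvalue. -/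
open Polynomial

/-- The quadratic `N(x) = (h₁+h₂+h₃)x² - (h₁(z₂+z₃)+h₂(z₁+z₃)+h₃(z₁+z₂))x
+ (h₁z₂z₃+h₂z₁z₃+h₃z₁z₂)` has a double root (vanishing discriminant) if and only if the
matrix `[[-(h₁+h₂)/(z₁-z₂), -h₃/(z₁-z₂)], [-h₂/(z₁-z₃), -(h₁+h₃)/(z₁-z₃)]]` has a repeated
eigenvalue, i.e. its characteristic polynomial is `(X - μ)²` for some `μ`. -/
theorem stmt_12 (h₁ h₂ h₃ : ℤ) (hh₁ : h₁ ≠ 0) (hh₂ : h₂ ≠ 0) (hh₃ : h₃ ≠ 0)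
    (z₁ z₂ z₃ : ℂ) (hz₁₂ : z₁ ≠ z₂) (hz₁₃ : z₁ ≠ z₃) (hz₂₃ : z₂ ≠ z₃) :
    (((h₁ : ℂ) * (z₂ + z₃) + (h₂ : ℂ) * (z₁ + z₃) + (h₃ : ℂ) * (z₁ + z₂)) ^ 2 -
        4 * ((h₁ : ℂ) + (h₂ : ℂ) + (h₃ : ℂ)) *
          ((h₁ : ℂ) * z₂ * z₃ + (h₂ : ℂ) * z₁ * z₃ + (h₃ : ℂ) * z₁ * z₂) = 0) ↔
      ∃ μ : ℂ,
        (Matrix.charpoly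
          !![-((h₁ : ℂ) + (h₂ : ℂ)) / (z₁ - z₂), -(h₃ : ℂ) / (z₁ - z₂);
             -(h₂ : ℂ) / (z₁ - z₃), -((h₁ : ℂ) + (h₃ : ℂ)) / (z₁ - z₃)]) =
          (X - C μ) ^ 2 := by
  have hz12 : z₁ - z₂ ≠ 0 := sub_ne_zero.mpr hz₁₂
  have hz13 : z₁ - z₃ ≠ 0 := sub_ne_zero.mpr hz₁₃
  set a : ℂ := -((h₁ : ℂ) + (h₂ : ℂ)) / (z₁ - z₂) with ha
  set b : ℂ := -(h₃ : ℂ) / (z₁ - z₂) with hb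
  set c : ℂ := -(h₂ : ℂ) / (z₁ - z₃) with hc
  set d : ℂ := -((h₁ : ℂ) + (h₃ : ℂ)) / (z₁ - z₃) with hd
  have hcp : (!![a, b; c, d]).charpoly = X ^ 2 - C (a + d) * X + C (a * d - b * c) := by
    rw [Matrix.charpoly, Matrix.det_fin_two]
    simp only [Matrix.charmatrix_apply, Matrix.diagonal_apply, Matrix.cons_val', Matrix.cons_val_zero,
      Matrix.cons_val_one, Matrix.head_cons, Matrix.head_fin_const, Matrix.empty_val',
      Matrix.cons_val_fin_one, if_true, if_pos rfl]
    norm_num [C_add, C_mul, C_sub]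
    ring
  have key : ((h₁ : ℂ) * (z₂ + z₃) + (h₂ : ℂ) * (z₁ + z₃) + (h₃ : ℂ) * (z₁ + z₂)) ^ 2 -
        4 * ((h₁ : ℂ) + (h₂ : ℂ) + (h₃ : ℂ)) *
          ((h₁ : ℂ) * z₂ * z₃ + (h₂ : ℂ) * z₁ * z₃ + (h₃ : ℂ) * z₁ * z₂)
      = ((z₁ - z₂) * (z₁ - z₃)) ^ 2 * ((a + d) ^ 2 - 4 * (a * d - b * c)) := by
    rw [ha, hb, hc, hd]
    field_simp
    ring
  rw [key, hcp]
  have hne : ((z₁ - z₂) * (z₁ - z₃)) ^ 2 ≠ 0 := pow_ne_zero _ (mul_ne_zero hz12 hz13)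
  clear_value a b c d
  clear ha hb hc hd
  rw [mul_eq_zero, or_iff_right hne]
  constructor
  · intro h
    refine ⟨(a + d) / 2, ?_⟩
    have h2 : a * d - b * c = ((a + d) / 2) * ((a + d) / 2) := by linear_combination -h / 4
    rw [h2]
    have h3 : a + d = (a + d) / 2 + (a + d) / 2 := by ring
    rw [h3, C_add, C_mul]
    ring
  · rintro ⟨μ, hμ⟩
    have e1 := congrArg (fun p => p.coeff 1) hμ
    have e0 := congrArg (fun p => p.coeff 0) hμ
    have hexp : (X - C μ) ^ 2 = X ^ 2 - C (μ + μ) * X + C (μ * μ) := by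
      rw [C_add, C_mul]; ring
    simp only [hexp, coeff_add, coeff_sub, coeff_X_pow, coeff_C_mul, coeff_X, coeff_C,
      coeff_one] at e1 e0
    norm_num at e1 e0
    linear_combination (-(a + d + μ + μ)) * e1 - 4 * e0
end

section
/- Let M be a multiset of r integers. There exists a unique weakly increasing sequence M̄ = (c_1 < c_2 < ... < c_r) of r distinct integers such that: (i) M̄ dominates M (when M is sorted increasingly as m_1 ≤ ... ≤ m_r, c_i ≥ m_i for all i), and (ii) any strictly increasing integer sequence M' of length r dominating M also dominates M̄. -/
/-- A strictly increasing integer sequence grows at least by the index gap. -/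
lemma strictMono_gap {r : ℕ} (f : Fin r → ℤ) (hf : StrictMono f)
    {j i : Fin r} (h : j ≤ i) : f j + ((i : ℤ) - (j : ℤ)) ≤ f i := by
  obtain ⟨d, hd⟩ : ∃ d : ℕ, (i : ℕ) = (j : ℕ) + d := ⟨(i : ℕ) - j, by omega⟩
  induction d generalizing i with
  | zero =>
    have : j = i := Fin.ext (by omega)
    subst this; simp
  | succ d ih =>
    have hlt : (j : ℕ) + d < r := by omega
    set k : Fin r := ⟨(j : ℕ) + d, hlt⟩
    have hk : (k : ℕ) = (j : ℕ) + d := rfl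
    have h1 := ih (i := k) (Fin.le_def.mpr (by omega)) hk
    have h2 : f k < f i := hf (Fin.lt_def.mpr (by omega))
    push_cast [hd, hk] at *
    omega

/-- For a multiset of `r` integers, given by its weakly increasing enumeration `M`, there is a
unique strictly increasing sequence `M̄` of `r` integers (the "dominant" of `M`) such that
`M̄` dominates `M` (pointwise `≥`) and every strictly increasing integer sequence of length `r`
dominating `M` also dominates `M̄`. -/
theorem stmt_13 (r : ℕ) (M : Fin r → ℤ) (hM : Monotone M) :
    ∃! c : Fin r → ℤ,
      StrictMono c ∧ (∀ i, M i ≤ c i) ∧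
      ∀ c' : Fin r → ℤ, StrictMono c' → (∀ i, M i ≤ c' i) → ∀ i, c i ≤ c' i := by
  have hne : ∀ i : Fin r, (Finset.Iic i).Nonempty := fun i => ⟨i, Finset.mem_Iic.mpr le_rfl⟩
  set c : Fin r → ℤ := fun i => (Finset.Iic i).sup' (hne i) (fun j => M j + ((i : ℤ) - (j : ℤ)))
    with hc
  have hdom : ∀ i, M i ≤ c i := fun i =>
    le_trans (by simp) (Finset.le_sup' _ (Finset.mem_Iic.mpr (le_refl i)))
  have hsm : StrictMono c := by
    intro i k hik
    have : c i ≤ c k - 1 := by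
      simp only [hc]
      apply Finset.sup'_le
      intro j hj
      have hjk : j ∈ Finset.Iic k := Finset.mem_Iic.mpr (le_trans (Finset.mem_Iic.mp hj) hik.le)
      have := Finset.le_sup' (fun j => M j + ((k : ℤ) - (j : ℤ))) hjk
      have hik' : (i : ℕ) < (k : ℕ) := hik
      omega
    omega
  have hmin : ∀ c' : Fin r → ℤ, StrictMono c' → (∀ i, M i ≤ c' i) → ∀ i, c i ≤ c' i := by
    intro c' hsm' hdom' i
    apply Finset.sup'_le
    intro j hj
    have h1 := strictMono_gap c' hsm' (Finset.mem_Iic.mp hj)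
    have h2 := hdom' j
    omega
  refine ⟨c, ⟨hsm, hdom, hmin⟩, ?_⟩
  rintro c' ⟨hsm', hdom', hmin'⟩
  funext i
  exact le_antisymm (hmin' c hsm hdom i) (hmin c' hsm' hdom' i)
end

section
/- Let V_1,...,V_k be finite-dimensional spaces of functions meromorphic around z with dim V_i = d_i, and suppose V = V_1 ⊕ ... ⊕ V_k has dimension Σ d_i. Let M be the multiset union of the exponent sets e(V_i, z). Then the (strictly increasing) sequence of exponents e(V, z) dominates the dominant M̄ of M. -/
/-- The set of exponents of a space `V` of functions meromorphic at `z`. -/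
def expSet (V : Submodule ℂ (ℂ → ℂ)) (z : ℂ) : Set ℤ :=
  {m | ∃ f ∈ V, ∃ hf : MeromorphicAt f z, meromorphicOrderAt f z = (m : WithTop ℤ)}

open Filter Topology Module Submodule

namespace Stmt15Aux

variable {z : ℂ}

open Classical in
/-- Total order-of-vanishing function. -/
noncomputable def mord (z : ℂ) (f : ℂ → ℂ) : WithTop ℤ :=
  if h : MeromorphicAt f z then meromorphicOrderAt f z else ⊤

lemma mord_eq {f : ℂ → ℂ} (hf : MeromorphicAt f z) : mord z f = meromorphicOrderAt f z := by
  unfold mord; rw [dif_pos hf]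

lemma mord_top_iff {f : ℂ → ℂ} (hf : MeromorphicAt f z) :
    mord z f = ⊤ ↔ ∀ᶠ w in 𝓝[≠] z, f w = 0 := by
  rw [mord_eq hf]; exact meromorphicOrderAt_eq_top_iff

lemma mord_int_iff {f : ℂ → ℂ} (hf : MeromorphicAt f z) (n : ℤ) :
    mord z f = (n : WithTop ℤ) ↔ ∃ g : ℂ → ℂ, AnalyticAt ℂ g z ∧ g z ≠ 0 ∧
      ∀ᶠ w in 𝓝[≠] z, f w = (w - z) ^ n • g w := by
  rw [mord_eq hf]; exact meromorphicOrderAt_eq_int_iff hf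

lemma mord_zero : mord z (0 : ℂ → ℂ) = ⊤ := by
  have h0 : MeromorphicAt (0 : ℂ → ℂ) z := MeromorphicAt.const 0 z
  rw [mord_top_iff h0]
  exact Eventually.of_forall (fun _ => rfl)

/-- If `f` agrees with `(w-z)^n • H w` near `z` with `H` analytic, then `mord z f ≥ n`,
and `≥ n+1` if moreover `H z = 0`. -/
lemma le_mord_of_rep {f : ℂ → ℂ} (hf : MeromorphicAt f z) {n : ℤ} {H : ℂ → ℂ}
    (hH : AnalyticAt ℂ H z) (hrep : ∀ᶠ w in 𝓝[≠] z, f w = (w - z) ^ n • H w) :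
    (n : WithTop ℤ) ≤ mord z f ∧ (H z = 0 → ((n + 1 : ℤ) : WithTop ℤ) ≤ mord z f) := by
  rcases eq_or_ne (analyticOrderAt H z) ⊤ with htop | hne
  · have h0 : ∀ᶠ w in 𝓝 z, H w = 0 := analyticOrderAt_eq_top.mp htop
    have : mord z f = ⊤ := by
      rw [mord_top_iff hf]
      filter_upwards [hrep, nhdsWithin_le_nhds h0] with w h1 h2
      rw [h1, h2, smul_zero]
    rw [this]; exact ⟨le_top, fun _ => le_top⟩
  · obtain ⟨k, hk⟩ := WithTop.ne_top_iff_exists.mp hne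
    obtain ⟨G, hG, hGz, hHG⟩ := (hH.analyticOrderAt_eq_natCast).mp hk.symm
    have hfor : mord z f = ((n + k : ℤ) : WithTop ℤ) := by
      rw [mord_int_iff hf]
      refine ⟨G, hG, hGz, ?_⟩
      filter_upwards [hrep, nhdsWithin_le_nhds hHG, self_mem_nhdsWithin] with w h1 h2 hw
      have hwz : w - z ≠ 0 := sub_ne_zero.mpr hw
      rw [h1, h2, smul_smul, ← zpow_natCast (w - z) k, ← zpow_add₀ hwz]
    constructor
    · rw [hfor]
      exact_mod_cast (by omega : n ≤ n + (k : ℤ))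
    · intro hHz
      have hk0 : k ≠ 0 := by
        rintro rfl
        apply hGz
        have : H z = G z := by
          have := hHG.self_of_nhds
          simpa using this
        rw [← this, hHz]
      rw [hfor]
      exact_mod_cast (by omega : n + 1 ≤ n + (k : ℤ))

lemma mero_smul {c : ℂ} {f : ℂ → ℂ} (hf : MeromorphicAt f z) :
    MeromorphicAt (c • f) z := by
  have : c • f = (fun _ : ℂ => c) • f := by funext w; simp
  rw [this]
  exact (MeromorphicAt.const c z).smul hf

lemma mord_smul {c : ℂ} (hc : c ≠ 0) {f : ℂ → ℂ} (hf : MeromorphicAt f z) :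
    mord z (c • f) = mord z f := by
  have hcf : MeromorphicAt (c • f) z := mero_smul hf
  rcases eq_or_ne (mord z f) ⊤ with htop | hne
  · rw [htop, mord_top_iff hcf]
    filter_upwards [(mord_top_iff hf).mp htop] with w hw
    simp [hw]
  · obtain ⟨m, hm⟩ := WithTop.ne_top_iff_exists.mp hne
    rw [← hm]
    obtain ⟨G, hG, hGz, hfG⟩ := (mord_int_iff hf m).mp hm.symm
    rw [mord_int_iff hcf m]
    refine ⟨fun w => c * G w, analyticAt_const.mul hG, mul_ne_zero hc hGz, ?_⟩
    filter_upwards [hfG] with w hw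
    simp only [Pi.smul_apply, hw, smul_eq_mul]
    ring

lemma mord_neg {f : ℂ → ℂ} (hf : MeromorphicAt f z) : mord z (-f) = mord z f := by
  have : -f = (-1 : ℂ) • f := by funext w; simp
  rw [this, mord_smul (by norm_num) hf]

lemma mord_add_ge_aux {f g : ℂ → ℂ} (hf : MeromorphicAt f z) (hg : MeromorphicAt g z)
    (hle : mord z f ≤ mord z g) : mord z f ≤ mord z (f + g) := by
  rcases eq_or_ne (mord z f) ⊤ with htop | hne
  · have hgt : mord z g = ⊤ := le_antisymm le_top (htop ▸ hle)
    have : mord z (f + g) = ⊤ := by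
      rw [mord_top_iff (hf.add hg)]
      filter_upwards [(mord_top_iff hf).mp htop, (mord_top_iff hg).mp hgt] with w h1 h2
      simp [h1, h2]
    rw [this]; exact le_top
  · obtain ⟨a, ha⟩ := WithTop.ne_top_iff_exists.mp hne
    obtain ⟨G, hG, hGz, hfG⟩ := (mord_int_iff hf a).mp ha.symm
    rcases eq_or_ne (mord z g) ⊤ with hgt | hgne
    · -- g vanishes near z, so f + g ~ f
      have : mord z (f + g) = (a : WithTop ℤ) := by
        rw [mord_int_iff (hf.add hg) a]
        refine ⟨G, hG, hGz, ?_⟩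
        filter_upwards [hfG, (mord_top_iff hg).mp hgt] with w h1 h2
        simp [h1, h2]
      rw [this, ← ha]
    · obtain ⟨b, hb⟩ := WithTop.ne_top_iff_exists.mp hgne
      obtain ⟨H, hH, hHz, hgH⟩ := (mord_int_iff hg b).mp hb.symm
      have hab : a ≤ b := by
        rw [← ha, ← hb] at hle
        exact_mod_cast hle
      set K : ℂ → ℂ := fun w => G w + (w - z) ^ (b - a).toNat * H w with hK
      have hKa : AnalyticAt ℂ K z :=
        hG.add (((analyticAt_id.sub analyticAt_const).pow _).mul hH)
      have hrep : ∀ᶠ w in 𝓝[≠] z, (f + g) w = (w - z) ^ a • K w := by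
        filter_upwards [hfG, hgH, self_mem_nhdsWithin] with w h1 h2 hw
        have hwz : w - z ≠ 0 := sub_ne_zero.mpr hw
        have hpow : ((w - z) ^ (b - a).toNat : ℂ) = (w - z) ^ (b - a : ℤ) := by
          rw [← zpow_natCast, Int.toNat_of_nonneg (sub_nonneg.mpr hab)]
        have hb' : (w - z) ^ b = (w - z) ^ a * (w - z) ^ (b - a : ℤ) := by
          rw [← zpow_add₀ hwz]; ring_nf
        simp only [Pi.add_apply, h1, h2, hK, smul_eq_mul, hpow, hb']
        ring
      have := (le_mord_of_rep (hf.add hg) hKa hrep).1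
      rw [← ha]
      exact this

lemma mord_add_ge {f g : ℂ → ℂ} (hf : MeromorphicAt f z) (hg : MeromorphicAt g z)
    {x : WithTop ℤ} (h1 : x ≤ mord z f) (h2 : x ≤ mord z g) :
    x ≤ mord z (f + g) := by
  -- reduce to a `wlog`-style helper proved below
  rcases le_total (mord z f) (mord z g) with hle | hle
  · exact le_trans h1 (mord_add_ge_aux hf hg hle)
  · have : f + g = g + f := by funext w; simp [add_comm]
    rw [this]
    exact le_trans h2 (mord_add_ge_aux hg hf hle)

lemma mord_sum_ge {ι : Type*} (s : Finset ι) (F : ι → ℂ → ℂ)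
    (hF : ∀ i ∈ s, MeromorphicAt (F i) z) {x : WithTop ℤ}
    (h : ∀ i ∈ s, x ≤ mord z (F i)) :
    MeromorphicAt (∑ i ∈ s, F i) z ∧ x ≤ mord z (∑ i ∈ s, F i) := by
  classical
  induction s using Finset.induction_on with
  | empty => simp only [Finset.sum_empty]; exact ⟨MeromorphicAt.const (0 : ℂ) z, by rw [mord_zero]; exact le_top⟩
  | insert _ _ ha =>
    rename_i a s ih
    obtain ⟨hm, hx⟩ := ih (fun i hi => hF i (Finset.mem_insert_of_mem hi))
      (fun i hi => h i (Finset.mem_insert_of_mem hi))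
    rw [Finset.sum_insert ha]
    have hma := hF a (Finset.mem_insert_self a s)
    exact ⟨hma.add hm, mord_add_ge hma hm (h a (Finset.mem_insert_self a s)) hx⟩

lemma mord_add_eq_left {f g : ℂ → ℂ} (hf : MeromorphicAt f z) (hg : MeromorphicAt g z)
    (h : mord z f < mord z g) : mord z (f + g) = mord z f := by
  have h1 : mord z f ≤ mord z (f + g) := mord_add_ge hf hg le_rfl h.le
  rcases eq_or_ne (mord z (f + g)) (mord z f) with he | hne
  · exact he
  · exfalso
    have h2 : mord z f < mord z (f + g) := lt_of_le_of_ne h1 (Ne.symm hne)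
    have h3 : f + g + -g = f := by funext w; simp
    have h4 : mord z (f + g + -g) ≥ min (mord z (f + g)) (mord z (-g)) :=
      mord_add_ge (hf.add hg) hg.neg (min_le_left _ _) (min_le_right _ _)
    rw [h3] at h4
    rw [mord_neg hg] at h4
    exact absurd h4 (not_le.mpr (lt_min h2 h))

/-- Leading coefficient subtraction. -/
lemma exists_sub_mord_gt {f g : ℂ → ℂ} (hf : MeromorphicAt f z) (hg : MeromorphicAt g z)
    {m : ℤ} (hfm : mord z f = (m : WithTop ℤ)) (hgm : mord z g = (m : WithTop ℤ)) :
    ∃ c : ℂ, ((m + 1 : ℤ) : WithTop ℤ) ≤ mord z (g - c • f) := by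
  obtain ⟨F, hF, hFz, hfF⟩ := (mord_int_iff hf m).mp hfm
  obtain ⟨G, hG, hGz, hgG⟩ := (mord_int_iff hg m).mp hgm
  refine ⟨G z / F z, ?_⟩
  set c : ℂ := G z / F z with hc
  have hsub : MeromorphicAt (g - c • f) z := hg.sub (mero_smul hf)
  set H : ℂ → ℂ := fun w => G w - c * F w with hH
  have hHa : AnalyticAt ℂ H z := hG.sub (analyticAt_const.mul hF)
  have hHz : H z = 0 := by
    simp only [hH, hc]
    field_simp
    ring
  have hrep : ∀ᶠ w in 𝓝[≠] z, (g - c • f) w = (w - z) ^ m • H w := by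
    filter_upwards [hfF, hgG] with w h1 h2
    simp only [Pi.sub_apply, Pi.smul_apply, h1, h2, hH, smul_eq_mul]
    ring
  exact (le_mord_of_rep hsub hHa hrep).2 hHz

/-- The submodule of functions meromorphic at `z` with order at least `x`. -/
noncomputable def ordGe (z : ℂ) (x : ℤ) : Submodule ℂ (ℂ → ℂ) where
  carrier := {f | MeromorphicAt f z ∧ (x : WithTop ℤ) ≤ mord z f}
  zero_mem' := ⟨MeromorphicAt.const 0 z, by rw [mord_zero]; exact le_top⟩
  add_mem' := fun ha hb => ⟨ha.1.add hb.1, mord_add_ge ha.1 hb.1 ha.2 hb.2⟩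
  smul_mem' := by
    intro c f hf
    rcases eq_or_ne c 0 with rfl | hc
    · rw [zero_smul]
      exact ⟨MeromorphicAt.const 0 z, by rw [mord_zero]; exact le_top⟩
    · exact ⟨mero_smul hf.1, by rw [mord_smul hc hf.1]; exact hf.2⟩

lemma mem_ordGe {f : ℂ → ℂ} {x : ℤ} :
    f ∈ ordGe z x ↔ MeromorphicAt f z ∧ (x : WithTop ℤ) ≤ mord z f := Iff.rfl

lemma mem_expSet_iff {W : Submodule ℂ (ℂ → ℂ)} {y : ℤ} :
    y ∈ expSet W z ↔ ∃ f ∈ W, MeromorphicAt f z ∧ mord z f = (y : WithTop ℤ) := by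
  constructor
  · rintro ⟨f, hfW, hf, ho⟩
    exact ⟨f, hfW, hf, by rw [mord_eq hf]; exact ho⟩
  · rintro ⟨f, hfW, hf, ho⟩
    exact ⟨f, hfW, hf, by rw [← mord_eq hf]; exact ho⟩

/-- Functions with distinct (finite) orders are linearly independent. -/
lemma indep_of_orders (S : Finset ℤ) (F : ℤ → ℂ → ℂ)
    (hmero : ∀ y ∈ S, MeromorphicAt (F y) z)
    (ho : ∀ y ∈ S, mord z (F y) = (y : WithTop ℤ)) :
    LinearIndependent ℂ (fun y : {y // y ∈ S} => F y) := by
  classical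
  rw [linearIndependent_iff']
  intro s g hsum y0 hy0
  by_contra hne
  obtain ⟨t0, ht0s, ht0min⟩ := Finset.exists_min_image (s.filter (fun y => g y ≠ 0))
    (fun y => (y : ℤ)) ⟨y0, Finset.mem_filter.mpr ⟨hy0, hne⟩⟩
  rw [Finset.mem_filter] at ht0s
  obtain ⟨ht0s, hgt0⟩ := ht0s
  -- split the sum
  have hsplit : g t0 • F t0 + ∑ y ∈ s.erase t0, g y • F y = 0 := by
    rw [Finset.add_sum_erase s (fun y : {y // y ∈ S} => g y • F (y : ℤ)) ht0s]; exact hsum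
  have hmero' : ∀ y ∈ s.erase t0, MeromorphicAt (g y • F y) z :=
    fun y _ => mero_smul (hmero y y.2)
  have hge : ∀ y ∈ s.erase t0, (((t0 : ℤ) + 1 : ℤ) : WithTop ℤ) ≤ mord z (g y • F y) := by
    intro y hy
    rcases eq_or_ne (g y) 0 with h0 | h0
    · rw [h0, zero_smul, mord_zero]; exact le_top
    · rw [mord_smul h0 (hmero y y.2), ho y y.2]
      have hmem : y ∈ s.filter (fun y => g y ≠ 0) :=
        Finset.mem_filter.mpr ⟨Finset.mem_of_mem_erase hy, h0⟩
      have hlt : (t0 : ℤ) < (y : ℤ) := by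
        have hle := ht0min y hmem
        have hneq : (y : ℤ) ≠ (t0 : ℤ) := by
          intro h
          exact (Finset.ne_of_mem_erase hy) (Subtype.ext h)
        omega
      exact_mod_cast (by omega : (t0 : ℤ) + 1 ≤ (y : ℤ))
  obtain ⟨hsm, hsge⟩ := mord_sum_ge (s.erase t0) (fun y => g y • F y) hmero' hge
  have h1 : mord z (g t0 • F t0) = ((t0 : ℤ) : WithTop ℤ) := by
    rw [mord_smul hgt0 (hmero t0 t0.2), ho t0 t0.2]
  have hlt : mord z (g t0 • F t0) < mord z (∑ y ∈ s.erase t0, g y • F y) := by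
    rw [h1]
    calc ((t0 : ℤ) : WithTop ℤ) < (((t0 : ℤ) + 1 : ℤ) : WithTop ℤ) := by
          exact_mod_cast (by omega : (t0 : ℤ) < (t0 : ℤ) + 1)
      _ ≤ _ := hsge
  have := mord_add_eq_left (mero_smul (hmero t0 t0.2)) hsm hlt
  rw [hsplit, mord_zero, h1] at this
  exact (WithTop.coe_ne_top (this.symm))

/-- Lemma A: distinct exponents `≥ x` in `e(W,z)` bound below the dimension of the
subspace of elements of order `≥ x`. -/
lemma card_le_finrank (W : Submodule ℂ (ℂ → ℂ)) [FiniteDimensional ℂ W] (x : ℤ)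
    (S : Finset ℤ) (hS : ∀ y ∈ S, y ∈ expSet W z ∧ x ≤ y) :
    S.card ≤ finrank ℂ (W ⊓ ordGe z x : Submodule ℂ (ℂ → ℂ)) := by
  classical
  have hch : ∀ y ∈ S, ∃ f, f ∈ W ∧ MeromorphicAt f z ∧ mord z f = (y : WithTop ℤ) := by
    intro y hy
    obtain ⟨f, hfW, hf, ho⟩ := mem_expSet_iff.mp (hS y hy).1
    exact ⟨f, hfW, hf, ho⟩
  choose! F hFW hFm hFo using hch
  have hmem : ∀ y ∈ S, F y ∈ (W ⊓ ordGe z x : Submodule ℂ (ℂ → ℂ)) := by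
    intro y hy
    refine Submodule.mem_inf.mpr ⟨hFW y hy, mem_ordGe.mpr ⟨hFm y hy, ?_⟩⟩
    rw [hFo y hy]
    exact_mod_cast (hS y hy).2
  have hindep : LinearIndependent ℂ (fun y : {y // y ∈ S} => F y) :=
    indep_of_orders S F hFm hFo
  set P : Submodule ℂ (ℂ → ℂ) := W ⊓ ordGe z x with hP
  haveI : FiniteDimensional ℂ P := Submodule.finiteDimensional_of_le inf_le_left
  set v : {y // y ∈ S} → P := fun y => ⟨F y, hmem y y.2⟩ with hv
  have hvindep : LinearIndependent ℂ v := by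
    apply LinearIndependent.of_comp P.subtype
    exact hindep
  have := hvindep.fintype_card_le_finrank
  simpa [Fintype.card_coe] using this

/-- Lemma B: the dimension of a space of meromorphic germs with finite orders is
at most the number of its exponents. -/
lemma finrank_le_card (n : ℕ) : ∀ (P : Submodule ℂ (ℂ → ℂ)), FiniteDimensional ℂ P →
    finrank ℂ P ≤ n →
    (∀ f ∈ P, MeromorphicAt f z) →
    (∀ f ∈ P, mord z f = ⊤ → f = 0) →
    ∀ F : Finset ℤ, expSet P z ⊆ (F : Set ℤ) → finrank ℂ P ≤ F.card := by
  classical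
  induction n with
  | zero => intro P _ h0 _ _ F _; omega
  | succ n IH =>
    intro P hPfd hPn hPm hPg F hPF
    rcases Nat.eq_zero_or_pos (finrank ℂ P) with h0 | hpos
    · omega
    -- find an exponent
    have hPne : P ≠ ⊥ := by
      intro h
      rw [h, finrank_bot] at hpos
      omega
    obtain ⟨f, hfP, hf0⟩ := Submodule.exists_mem_ne_zero_of_ne_bot hPne
    have hfm := hPm f hfP
    have hford : mord z f ≠ ⊤ := fun h => hf0 (hPg f hfP h)
    obtain ⟨m, hm⟩ := WithTop.ne_top_iff_exists.mp hford
    have hmE : m ∈ expSet P z := mem_expSet_iff.mpr ⟨f, hfP, hfm, hm.symm⟩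
    set T : Finset ℤ := F.filter (fun y => y ∈ expSet P z) with hT
    have hmT : m ∈ T := Finset.mem_filter.mpr ⟨hPF hmE, hmE⟩
    set m0 : ℤ := T.min' ⟨m, hmT⟩ with hm0
    have hm0T : m0 ∈ T := T.min'_mem _
    have hm0F : m0 ∈ F := (Finset.mem_filter.mp hm0T).1
    have hm0E : m0 ∈ expSet P z := (Finset.mem_filter.mp hm0T).2
    obtain ⟨f0, hf0P, hf0m, hf0o⟩ := mem_expSet_iff.mp hm0E
    have hf0ne : f0 ≠ 0 := by
      intro h
      rw [h, mord_zero] at hf0o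
      exact WithTop.coe_ne_top hf0o.symm
    set P' : Submodule ℂ (ℂ → ℂ) := P ⊓ ordGe z (m0 + 1) with hP'
    haveI hP'fd : FiniteDimensional ℂ P' := Submodule.finiteDimensional_of_le inf_le_left
    -- key 1 : P ≤ P' ⊔ span {f0}
    have key1 : P ≤ P' ⊔ Submodule.span ℂ {f0} := by
      intro g hgP
      rcases eq_or_ne (mord z g) ⊤ with hgt | hgne
      · have : g = 0 := hPg g hgP hgt
        rw [this]; exact Submodule.zero_mem _
      · obtain ⟨y, hy⟩ := WithTop.ne_top_iff_exists.mp hgne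
        have hyE : y ∈ expSet P z := mem_expSet_iff.mpr ⟨g, hgP, hPm g hgP, hy.symm⟩
        have hyT : y ∈ T := Finset.mem_filter.mpr ⟨hPF hyE, hyE⟩
        have hm0y : m0 ≤ y := T.min'_le _ hyT
        rcases lt_or_eq_of_le hm0y with hlt | heq
        · apply Submodule.mem_sup_left
          refine Submodule.mem_inf.mpr ⟨hgP, mem_ordGe.mpr ⟨hPm g hgP, ?_⟩⟩
          rw [← hy]
          exact_mod_cast (by omega : m0 + 1 ≤ y)
        · -- leading coefficient subtraction
          obtain ⟨c, hc⟩ := exists_sub_mord_gt hf0m (hPm g hgP) hf0o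
            (by rw [← hy, ← heq])
          have hsubP : g - c • f0 ∈ P := Submodule.sub_mem _ hgP (Submodule.smul_mem _ c hf0P)
          have hsub' : g - c • f0 ∈ P' := Submodule.mem_inf.mpr
            ⟨hsubP, mem_ordGe.mpr ⟨hPm _ hsubP, hc⟩⟩
          have : g = (g - c • f0) + c • f0 := by abel
          rw [this]
          exact Submodule.add_mem _ (Submodule.mem_sup_left hsub')
            (Submodule.mem_sup_right (Submodule.smul_mem _ c (Submodule.mem_span_singleton_self f0)))
    -- key 2 : finrank P ≤ finrank P' + 1
    have key2 : finrank ℂ P ≤ finrank ℂ P' + 1 := by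
      calc finrank ℂ P ≤ finrank ℂ (P' ⊔ Submodule.span ℂ {f0} : Submodule ℂ (ℂ → ℂ)) :=
            Submodule.finrank_mono key1
        _ ≤ finrank ℂ P' + finrank ℂ (Submodule.span ℂ {f0} : Submodule ℂ (ℂ → ℂ)) :=
            Submodule.finrank_add_le_finrank_add_finrank _ _
        _ = finrank ℂ P' + 1 := by rw [finrank_span_singleton hf0ne]
    -- key 3 : finrank P' < finrank P
    have key3 : finrank ℂ P' < finrank ℂ P := by
      apply Submodule.finrank_lt_finrank_of_lt
      refine lt_of_le_of_ne inf_le_left ?_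
      intro h
      have : f0 ∈ P' := h ▸ hf0P
      obtain ⟨-, hge⟩ := Submodule.mem_inf.mp this
      rw [mem_ordGe] at hge
      rw [hf0o] at hge
      have : (m0 + 1 : ℤ) ≤ m0 := by exact_mod_cast hge.2
      omega
    -- apply the induction hypothesis
    have hsub : expSet P' z ⊆ ((F.erase m0 : Finset ℤ) : Set ℤ) := by
      intro y hy
      obtain ⟨g, hgP', hgm, hgo⟩ := mem_expSet_iff.mp hy
      obtain ⟨hgP, hge⟩ := Submodule.mem_inf.mp hgP'
      rw [mem_ordGe, hgo] at hge
      have hy1 : (m0 + 1 : ℤ) ≤ y := by exact_mod_cast hge.2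
      have hyF : y ∈ F := hPF (mem_expSet_iff.mpr ⟨g, hgP, hgm, hgo⟩)
      simp only [Finset.coe_erase, Set.mem_diff, Set.mem_singleton_iff]
      exact ⟨hyF, by omega⟩
    have hIH : finrank ℂ P' ≤ (F.erase m0).card := by
      apply IH P' hP'fd (by omega) (fun g hg => hPm g (Submodule.mem_inf.mp hg).1)
        (fun g hg h => hPg g (Submodule.mem_inf.mp hg).1 h) _ hsub
    have hcard : (F.erase m0).card = F.card - 1 := Finset.card_erase_of_mem hm0F
    have hFpos : 1 ≤ F.card := Finset.card_pos.mpr ⟨m0, hm0F⟩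
    omega

section Dims

variable {ι : Type*} [DecidableEq ι] {VV : Type*} [AddCommGroup VV] [Module ℂ VV]

lemma fd_finset_sup (s : Finset ι) (A : ι → Submodule ℂ VV)
    (hA : ∀ i, FiniteDimensional ℂ (A i)) : FiniteDimensional ℂ (s.sup A : Submodule ℂ VV) := by
  classical
  induction s using Finset.induction_on with
  | empty => rw [Finset.sup_empty]; exact (inferInstance : FiniteDimensional ℂ (⊥ : Submodule ℂ VV))
  | insert _ _ ha =>
    rename_i a s ih
    rw [Finset.sup_insert]
    haveI := hA a
    haveI := ih
    infer_instance

lemma finrank_finset_sup_le (s : Finset ι) (A : ι → Submodule ℂ VV)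
    (hA : ∀ i, FiniteDimensional ℂ (A i)) :
    finrank ℂ (s.sup A : Submodule ℂ VV) ≤ ∑ i ∈ s, finrank ℂ (A i) := by
  classical
  induction s using Finset.induction_on with
  | empty => simp
  | insert _ _ ha =>
    rename_i a s ih
    rw [Finset.sup_insert, Finset.sum_insert ha]
    haveI := hA a
    haveI := fd_finset_sup s A hA
    calc finrank ℂ ((A a ⊔ s.sup A : Submodule ℂ VV)) ≤
        finrank ℂ (A a) + finrank ℂ (s.sup A : Submodule ℂ VV) :=
          Submodule.finrank_add_le_finrank_add_finrank _ _
      _ ≤ _ := by omega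

/-- Claim C: if the sum of the `A i` is direct (in terms of dimension count), then for any
subspaces `B i ≤ A i`, the dimensions of `B i` add up below the dimension of their sup. -/
lemma sum_finrank_le_finrank_sup (s : Finset ι) (A B : ι → Submodule ℂ VV)
    (hA : ∀ i, FiniteDimensional ℂ (A i)) (hBA : ∀ i, B i ≤ A i)
    (hdir : finrank ℂ (s.sup A : Submodule ℂ VV) = ∑ i ∈ s, finrank ℂ (A i)) :
    ∑ i ∈ s, finrank ℂ (B i) ≤ finrank ℂ (s.sup B : Submodule ℂ VV) := by
  classical
  induction s using Finset.induction_on with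
  | empty => simp
  | insert _ _ ha =>
    rename_i a s ih
    haveI := hA a
    haveI : FiniteDimensional ℂ (s.sup A : Submodule ℂ VV) := fd_finset_sup s A hA
    haveI : FiniteDimensional ℂ (B a) := Submodule.finiteDimensional_of_le (hBA a)
    have hBsupA : s.sup B ≤ s.sup A := Finset.sup_mono_fun (fun i _ => hBA i)
    haveI : FiniteDimensional ℂ (s.sup B : Submodule ℂ VV) :=
      Submodule.finiteDimensional_of_le hBsupA
    rw [Finset.sup_insert, Finset.sum_insert ha] at hdir
    have e1 : finrank ℂ ((A a ⊔ s.sup A : Submodule ℂ VV))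
        + finrank ℂ ((A a ⊓ s.sup A : Submodule ℂ VV))
        = finrank ℂ (A a) + finrank ℂ (s.sup A : Submodule ℂ VV) :=
      Submodule.finrank_sup_add_finrank_inf_eq _ _
    have e2 : finrank ℂ (s.sup A : Submodule ℂ VV) ≤ ∑ i ∈ s, finrank ℂ (A i) :=
      finrank_finset_sup_le s A hA
    -- deduce that the inf is trivial and sup-dim on `s` is exactly the sum
    have hinf0 : finrank ℂ ((A a ⊓ s.sup A : Submodule ℂ VV)) = 0 := by omega
    have hdir' : finrank ℂ (s.sup A : Submodule ℂ VV) = ∑ i ∈ s, finrank ℂ (A i) := by omega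
    have hinfbot : (A a ⊓ s.sup A : Submodule ℂ VV) = ⊥ := by
      haveI : FiniteDimensional ℂ ((A a ⊓ s.sup A : Submodule ℂ VV)) :=
        Submodule.finiteDimensional_of_le inf_le_left
      exact Submodule.finrank_eq_zero.mp hinf0
    have hBinf : (B a ⊓ s.sup B : Submodule ℂ VV) = ⊥ := by
      rw [← le_bot_iff, ← hinfbot]
      exact inf_le_inf (hBA a) hBsupA
    have e3 : finrank ℂ ((B a ⊔ s.sup B : Submodule ℂ VV))
        + finrank ℂ ((B a ⊓ s.sup B : Submodule ℂ VV))
        = finrank ℂ (B a) + finrank ℂ (s.sup B : Submodule ℂ VV) :=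
      Submodule.finrank_sup_add_finrank_inf_eq _ _
    rw [hBinf] at e3
    have hIH := ih hdir'
    rw [Finset.sup_insert, Finset.sum_insert ha]
    have : finrank ℂ ((⊥ : Submodule ℂ VV)) = 0 := finrank_bot ℂ VV
    omega

end Dims

end Stmt15Aux

open Stmt15Aux Module Submodule

/-- Let `V₁,…,V_k` be spaces of functions meromorphic around `z` with `dim V_i = d_i`, whose
sum `V` is direct of dimension `∑ d_i`.  Then the strictly increasing enumeration `es` of the
exponents `e(V,z)` dominates (pointwise) every weakly increasing enumeration `ms` of the
multiset union of the `e(V_i,z)`; equivalently, `e(V,z)` dominates the dominant `M̄` of that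
multiset. -/
theorem stmt_15 (k : ℕ) (z : ℂ) (V : Fin k → Submodule ℂ (ℂ → ℂ)) (d : Fin k → ℕ)
    (hmero : ∀ i, ∀ f ∈ V i, MeromorphicAt f z)
    (hgerm : ∀ f ∈ (⨆ i, V i : Submodule ℂ (ℂ → ℂ)), ∀ hf : MeromorphicAt f z,
      meromorphicOrderAt f z = ⊤ → f = 0)
    (hdim : ∀ i, Module.finrank ℂ (V i) = d i)
    (hdirect : Module.finrank ℂ (⨆ i, V i : Submodule ℂ (ℂ → ℂ)) = ∑ i, d i) :
    ∀ ms es : Fin (∑ i, d i) → ℤ,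
      Monotone ms →
      (∀ x : ℤ, Set.ncard {i | ms i = x} = Set.ncard {j : Fin k | x ∈ expSet (V j) z}) →
      StrictMono es →
      Set.range es = expSet (⨆ i, V i) z →
      ∀ i, ms i ≤ es i := by
  classical
  intro ms es hmono hcount hes hrange i
  have hnpos : 0 < ∑ j, d j := i.pos
  haveI hfd : FiniteDimensional ℂ (⨆ j, V j : Submodule ℂ (ℂ → ℂ)) :=
    FiniteDimensional.of_finrank_pos (by rw [hdirect]; exact hnpos)
  haveI fdVj : ∀ j, FiniteDimensional ℂ (V j) :=
    fun j => Submodule.finiteDimensional_of_le (le_iSup V j)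
  set x : ℤ := ms i with hx
  set A : Finset (Fin (∑ j, d j)) := Finset.univ.filter (fun i' => x ≤ ms i') with hA
  set B : Finset (Fin (∑ j, d j)) := Finset.univ.filter (fun t => x ≤ es t) with hB
  -- Step 1 : n - i ≤ A.card
  have h1 : (∑ j, d j) - (i : ℕ) ≤ A.card := by
    have hsub : Finset.Ici i ⊆ A := by
      intro t ht
      exact Finset.mem_filter.mpr ⟨Finset.mem_univ _, hmono (Finset.mem_Ici.mp ht)⟩
    calc (∑ j, d j) - (i : ℕ) = (Finset.Ici i).card := (Fin.card_Ici i).symm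
      _ ≤ A.card := Finset.card_le_card hsub
  -- Step 2 : count A fiberwise
  set Y : Finset ℤ := A.image ms with hY
  have hxY : ∀ y ∈ Y, x ≤ y := by
    intro y hy
    obtain ⟨a, haA, rfl⟩ := Finset.mem_image.mp hy
    exact (Finset.mem_filter.mp haA).2
  have h2 : A.card = ∑ y ∈ Y, (Finset.univ.filter (fun i' => ms i' = y)).card := by
    rw [Finset.card_eq_sum_card_fiberwise (fun a ha => Finset.mem_image_of_mem ms ha)]
    refine Finset.sum_congr rfl (fun y hy => ?_)
    congr 1
    ext t
    simp only [hA, Finset.mem_filter, Finset.mem_univ, true_and]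
    refine ⟨fun h => h.2, fun h => ⟨?_, h⟩⟩
    rw [h]
    exact hxY y hy
  -- Step 3 : use the multiplicity hypothesis
  have hcount' : ∀ y : ℤ, (Finset.univ.filter (fun i' => ms i' = y)).card
      = (Finset.univ.filter (fun j => y ∈ expSet (V j) z)).card := by
    intro y
    have h := hcount y
    have e1 : {i' | ms i' = y} = ((Finset.univ.filter (fun i' => ms i' = y) :
        Finset (Fin (∑ j, d j))) : Set (Fin (∑ j, d j))) := by ext t; simp
    have e2 : {j : Fin k | y ∈ expSet (V j) z} =
        ((Finset.univ.filter (fun j => y ∈ expSet (V j) z) : Finset (Fin k)) : Set (Fin k)) := by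
      ext t; simp
    rw [e1, e2, Set.ncard_coe_finset, Set.ncard_coe_finset] at h
    exact h
  have h3 : A.card = ∑ j, (Y.filter (fun y => y ∈ expSet (V j) z)).card := by
    rw [h2]
    have : ∀ y ∈ Y, (Finset.univ.filter (fun i' => ms i' = y)).card
        = ∑ j, if y ∈ expSet (V j) z then 1 else 0 := by
      intro y _
      rw [hcount' y, Finset.card_filter]
    rw [Finset.sum_congr rfl this, Finset.sum_comm]
    refine Finset.sum_congr rfl (fun j _ => ?_)
    rw [Finset.card_filter]
  -- Step 4 : per-piece bound
  have h4 : ∀ j, (Y.filter (fun y => y ∈ expSet (V j) z)).card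
      ≤ finrank ℂ (V j ⊓ ordGe z x : Submodule ℂ (ℂ → ℂ)) := by
    intro j
    apply card_le_finrank (V j) x
    intro y hy
    rw [Finset.mem_filter] at hy
    exact ⟨hy.2, hxY y hy.1⟩
  -- Step 5 : independence
  have hsupV : Finset.univ.sup V = ⨆ j, V j := by
    simp [Finset.sup_eq_iSup]
  have h5 : ∑ j, finrank ℂ (V j ⊓ ordGe z x : Submodule ℂ (ℂ → ℂ))
      ≤ finrank ℂ ((⨆ j, V j) ⊓ ordGe z x : Submodule ℂ (ℂ → ℂ)) := by
    have hdir2 : finrank ℂ (Finset.univ.sup V : Submodule ℂ (ℂ → ℂ))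
        = ∑ j, finrank ℂ (V j) := by
      rw [hsupV, hdirect]
      exact Finset.sum_congr rfl (fun j _ => (hdim j).symm)
    have hstep := sum_finrank_le_finrank_sup (Finset.univ : Finset (Fin k)) V
      (fun j => V j ⊓ ordGe z x) fdVj (fun j => inf_le_left) hdir2
    refine le_trans hstep ?_
    haveI : FiniteDimensional ℂ ((⨆ j, V j) ⊓ ordGe z x : Submodule ℂ (ℂ → ℂ)) :=
      Submodule.finiteDimensional_of_le inf_le_left
    exact Submodule.finrank_mono (Finset.sup_le (fun j _ => inf_le_inf (le_iSup V j) le_rfl))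
  -- Step 6 : Lemma B
  set P : Submodule ℂ (ℂ → ℂ) := (⨆ j, V j) ⊓ ordGe z x with hP
  haveI : FiniteDimensional ℂ P := Submodule.finiteDimensional_of_le inf_le_left
  have h6 : finrank ℂ P ≤ B.card := by
    have hmem : ∀ f ∈ P, MeromorphicAt f z :=
      fun f hf => (mem_ordGe.mp (Submodule.mem_inf.mp hf).2).1
    have hg : ∀ f ∈ P, mord z f = ⊤ → f = 0 := by
      intro f hf htop
      have hfm := hmem f hf
      exact hgerm f (Submodule.mem_inf.mp hf).1 hfm (by rw [← mord_eq hfm]; exact htop)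
    have hsub : expSet P z ⊆ ((B.image es : Finset ℤ) : Set ℤ) := by
      intro y hy
      obtain ⟨f, hfP, hfm, hfo⟩ := mem_expSet_iff.mp hy
      obtain ⟨hfV, hford⟩ := Submodule.mem_inf.mp hfP
      have hyrange : y ∈ Set.range es := by
        rw [hrange]
        exact mem_expSet_iff.mpr ⟨f, hfV, hfm, hfo⟩
      obtain ⟨t, ht⟩ := hyrange
      have hxy : x ≤ y := by
        have := (mem_ordGe.mp hford).2
        rw [hfo] at this
        exact_mod_cast this
      have htB : t ∈ B := Finset.mem_filter.mpr ⟨Finset.mem_univ _, by rw [ht]; exact hxy⟩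
      exact Finset.mem_coe.mpr (Finset.mem_image.mpr ⟨t, htB, ht⟩)
    have := finrank_le_card (finrank ℂ P) P inferInstance le_rfl hmem hg (B.image es) hsub
    calc finrank ℂ P ≤ (B.image es).card := this
      _ = B.card := Finset.card_image_of_injective _ hes.injective
  have h4' : ∑ j, (Y.filter (fun y => y ∈ expSet (V j) z)).card
      ≤ ∑ j, finrank ℂ (V j ⊓ ordGe z x : Submodule ℂ (ℂ → ℂ)) :=
    Finset.sum_le_sum (fun j _ => h4 j)
  -- Step 7 : conclude
  by_contra hcon
  push_neg at hcon
  have hBsub : B ⊆ Finset.Ioi i := by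
    intro t ht
    have hxt : x ≤ es t := (Finset.mem_filter.mp ht).2
    rw [Finset.mem_Ioi]
    by_contra hti
    push_neg at hti
    have : es t ≤ es i := hes.monotone hti
    omega
  have h7 : B.card ≤ (∑ j, d j) - 1 - (i : ℕ) := by
    calc B.card ≤ (Finset.Ioi i).card := Finset.card_le_card hBsub
      _ = (∑ j, d j) - 1 - (i : ℕ) := Fin.card_Ioi i
  have hi : (i : ℕ) < ∑ j, d j := i.isLt
  omega
end

section
/- Let T_1 = Π_{k=1}^n (x - z_k)^{p_k} and T_2 = Π_{k=1}^n (x - z_k)^{q_k} with z_k distinct, p_k, q_k nonnegative integers, and let m = #{k : p_k + q_k ≠ 0} ≥ 1. A monic polynomial y of degree l with simple roots distinct from all z_k satisfies ln'(T_1 T_2)(t) = 0 at every root t of y if and only if there exists a polynomial ỹ with y·ỹ = c·N(T), where N(T) = Σ_{k: h_k≠0} h_k Π_{j: h_j≠0, j≠k}(x - z_j), h_k = p_k + q_k, and c a nonzero constant; moreover then deg ỹ = m - 1 - l. -/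
open Polynomial

/-- The `gl(1|1)` reproduction lemma: a monic polynomial `y` of degree `l`, with simple roots
distinct from the `z_k`, satisfies `ln'(T₁T₂)(t) = 0` at every root `t` of `y` if and only if
`y·ỹ = c·N(T)` for some polynomial `ỹ` and nonzero constant `c`, where
`N(T) = ∑_{h_k≠0} h_k ∏_{h_j≠0, j≠k}(x - z_j)`; moreover then `deg ỹ = m - 1 - l`. -/
theorem stmt_16 (n : ℕ) (z : Fin n → ℂ) (hz : Function.Injective z) (p q : Fin n → ℕ)
    (S : Finset (Fin n)) (hS : S = Finset.univ.filter (fun k => p k + q k ≠ 0))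
    (m : ℕ) (hmS : m = S.card) (hm : 1 ≤ m)
    (T₁ T₂ NT : Polynomial ℂ)
    (hT₁ : T₁ = ∏ k, (X - C (z k)) ^ (p k))
    (hT₂ : T₂ = ∏ k, (X - C (z k)) ^ (q k))
    (hNT : NT = ∑ k ∈ S, C ((p k + q k : ℕ) : ℂ) * ∏ j ∈ S.erase k, (X - C (z j)))
    (l : ℕ) (y : Polynomial ℂ) (hmonic : y.Monic) (hdeg : y.natDegree = l)
    (hsimple : Squarefree y) (hroots : ∀ t : ℂ, y.IsRoot t → ∀ k, t ≠ z k) :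
    ((∀ t : ℂ, y.IsRoot t →
        (derivative (T₁ * T₂)).eval t / (T₁ * T₂).eval t = 0) ↔
      ∃ yt : Polynomial ℂ, ∃ c : ℂ, c ≠ 0 ∧ y * yt = C c * NT) ∧
    (∀ yt : Polynomial ℂ, ∀ c : ℂ, c ≠ 0 → y * yt = C c * NT →
      yt.natDegree = m - 1 - l) := by
  have hposS : ∀ k ∈ S, 1 ≤ p k + q k := by
    intro k hk
    rw [hS, Finset.mem_filter] at hk
    omega
  have hTT : T₁ * T₂ = ∏ k ∈ S, (X - C (z k)) ^ (p k + q k) := by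
    rw [hT₁, hT₂, ← Finset.prod_mul_distrib]
    simp_rw [← pow_add]
    rw [hS]
    refine (Finset.prod_filter_of_ne ?_).symm
    intro x _ hne h0
    exact hne (by rw [h0, pow_zero])
  have dfin : ∀ (s : Finset (Fin n)) (f : Fin n → Polynomial ℂ),
      derivative (∏ k ∈ s, f k)
        = ∑ k ∈ s, (∏ j ∈ s.erase k, f j) * derivative (f k) := by
    intro s f
    rw [Finset.prod_eq_multiset_prod, derivative_prod, Finset.sum_eq_multiset_sum]
    congr 1
  have hderiv : derivative (T₁ * T₂)
      = NT * ∏ k ∈ S, (X - C (z k)) ^ (p k + q k - 1) := by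
    rw [hTT, dfin, hNT, Finset.sum_mul]
    refine Finset.sum_congr rfl fun k hk => ?_
    have hk1 := hposS k hk
    rw [derivative_pow, derivative_sub, derivative_X, derivative_C, sub_zero, mul_one]
    have key : ∏ j ∈ S.erase k, (X - C (z j)) ^ (p j + q j)
        = (∏ j ∈ S.erase k, (X - C (z j)))
          * ∏ j ∈ S.erase k, (X - C (z j)) ^ (p j + q j - 1) := by
      rw [← Finset.prod_mul_distrib]
      refine Finset.prod_congr rfl fun j hj => ?_
      have hj1 := hposS j (Finset.mem_of_mem_erase hj)
      rw [← pow_succ']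
      congr 1
      omega
    rw [key, ← Finset.mul_prod_erase S _ hk]
    ring
  have hne : ∀ t : ℂ, (∀ k, t ≠ z k) → ∀ e : Fin n → ℕ,
      (∏ k ∈ S, (X - C (z k)) ^ e k).eval t ≠ 0 := by
    intro t ht e
    rw [eval_prod]
    refine Finset.prod_ne_zero_iff.mpr fun k _ => ?_
    simp only [eval_pow, eval_sub, eval_X, eval_C]
    exact pow_ne_zero _ (sub_ne_zero.mpr (ht k))
  have hcond : ∀ t : ℂ, y.IsRoot t →
      ((derivative (T₁ * T₂)).eval t / (T₁ * T₂).eval t = 0 ↔ NT.eval t = 0) := by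
    intro t hroot
    have ht := hroots t hroot
    have h1 : (T₁ * T₂).eval t ≠ 0 := by rw [hTT]; exact hne t ht _
    have h2 : (∏ k ∈ S, (X - C (z k)) ^ (p k + q k - 1)).eval t ≠ 0 := hne t ht _
    rw [_root_.div_eq_zero_iff]
    constructor
    · rintro (h | h)
      · rw [hderiv, eval_mul] at h
        exact (mul_eq_zero.mp h).resolve_right h2
      · exact absurd h h1
    · intro h
      left
      rw [hderiv, eval_mul, h, zero_mul]
  -- degree and nonvanishing of NT
  have hmon : ∀ k ∈ S, (∏ j ∈ S.erase k, (X - C (z j))).Monic :=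
    fun k hk => monic_prod_of_monic _ _ fun j _ => monic_X_sub_C _
  have hdegprod : ∀ k ∈ S, (∏ j ∈ S.erase k, (X - C (z j))).natDegree = m - 1 := by
    intro k hk
    rw [natDegree_prod _ _ (fun j _ => X_sub_C_ne_zero _)]
    simp [natDegree_X_sub_C, Finset.card_erase_of_mem hk, hmS]
  have hcoeff : NT.coeff (m - 1) = ∑ k ∈ S, ((p k + q k : ℕ) : ℂ) := by
    rw [hNT, finset_sum_coeff]
    refine Finset.sum_congr rfl fun k hk => ?_
    rw [coeff_C_mul]
    have := (hmon k hk).coeff_natDegree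
    rw [hdegprod k hk] at this
    rw [this, mul_one]
  have hsum : (∑ k ∈ S, ((p k + q k : ℕ) : ℂ)) ≠ 0 := by
    rw [← Nat.cast_sum]
    refine Nat.cast_ne_zero.mpr ?_
    have hSne : S.Nonempty := Finset.card_pos.mp (by omega)
    obtain ⟨k, hk⟩ := hSne
    intro h0
    have := Finset.sum_eq_zero_iff.mp h0 k hk
    have := hposS k hk
    omega
  have hNT0 : NT ≠ 0 := by
    intro h
    rw [h, coeff_zero] at hcoeff
    exact hsum hcoeff.symm
  have hNTdeg : NT.natDegree = m - 1 := by
    refine le_antisymm ?_ (le_natDegree_of_ne_zero (by rw [hcoeff]; exact hsum))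
    rw [hNT]
    refine natDegree_sum_le_of_forall_le _ _ fun k hk => ?_
    exact le_trans (natDegree_C_mul_le _ _) (le_of_eq (hdegprod k hk))
  have hfwd : (∀ t : ℂ, y.IsRoot t → NT.eval t = 0) → y ∣ NT := by
    intro H
    have hle : y.roots ≤ NT.roots := by
      rw [Multiset.le_iff_count]
      intro t
      by_cases hmem : t ∈ y.roots
      · have h1 : Multiset.count t y.roots ≤ 1 :=
          Multiset.nodup_iff_count_le_one.mp (nodup_roots (PerfectField.separable_iff_squarefree.mpr hsimple)) t
        have ht : y.IsRoot t := isRoot_of_mem_roots hmem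
        have h2 : 1 ≤ Multiset.count t NT.roots := by
          rw [count_roots]
          exact (rootMultiplicity_pos hNT0).mpr (H t ht)
        omega
      · simp [Multiset.count_eq_zero_of_notMem hmem]
    have h1 : y = (y.roots.map fun a => X - C a).prod :=
      (IsAlgClosed.splits y).eq_prod_roots_of_monic hmonic
    have h2 : (y.roots.map fun a => X - C a).prod
        ∣ (NT.roots.map fun a => X - C a).prod :=
      Multiset.prod_dvd_prod_of_le (Multiset.map_le_map hle)
    rw [h1]
    exact dvd_trans h2 (prod_multiset_X_sub_C_dvd NT)
  constructor
  · constructor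
    · intro H
      obtain ⟨yt, hyt⟩ := hfwd fun t ht => (hcond t ht).mp (H t ht)
      exact ⟨yt, 1, one_ne_zero, by rw [map_one, one_mul, hyt]⟩
    · rintro ⟨yt, c, hc, heq⟩ t ht
      refine (hcond t ht).mpr ?_
      have h0 : (y * yt).eval t = 0 := by rw [eval_mul, ht.eq_zero, zero_mul]
      rw [heq, eval_mul, eval_C] at h0
      exact (mul_eq_zero.mp h0).resolve_left hc
  · intro yt c hc heq
    have hy0 : y ≠ 0 := hmonic.ne_zero
    have hyt0 : yt ≠ 0 := by
      rintro rfl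
      rw [mul_zero] at heq
      exact hNT0 ((mul_eq_zero.mp heq.symm).resolve_left (by simpa using hc))
    have hND := congrArg natDegree heq
    rw [natDegree_mul hy0 hyt0, natDegree_C_mul hc, hdeg, hNTdeg] at hND
    omega
end
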